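/- Let W·p denote the left ideal of the Weyl algebra W generated by p. The K-linear map from the polynomial ring K[X] to the quotient left module W/(W·p) sending Xⁿ to the class of qⁿ (for each n ≥ 0) is a bijection. (This identifies the coinvariant module of the time-reversal anti-involution, i.e. the Fock module, with K[q].) -/
import Mathlib


open FreeAlgebra in
/-- The defining relation of the Weyl algebra: `p·q = q·p + ℏ·1`, where
`q = ι 0` and `p = ι 1` are the generators of the free algebra. -/
inductive WeylRel (K : Type*) [Field K] (ℏ : K) :
    FreeAlgebra K (Fin 2) → FreeAlgebra K (Fin 2) → Prop
  | rel : WeylRel K ℏ (ι K 1 * ι K 0)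
      (ι K 0 * ι K 1 + algebraMap K (FreeAlgebra K (Fin 2)) ℏ)

/-- The Weyl algebra: the quotient of the free algebra `K⟨q,p⟩` by the
two-sided ideal generated by `pq - qp - ℏ`. -/
abbrev Weyl (K : Type*) [Field K] (ℏ : K) := RingQuot (WeylRel K ℏ)

/-- The generator `q` of the Weyl algebra. -/
noncomputable def Weyl.q (K : Type*) [Field K] (ℏ : K) : Weyl K ℏ :=
  RingQuot.mkAlgHom K (WeylRel K ℏ) (FreeAlgebra.ι K 0)

/-- The generator `p` of the Weyl algebra. -/
noncomputable def Weyl.p (K : Type*) [Field K] (ℏ : K) : Weyl K ℏ :=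
  RingQuot.mkAlgHom K (WeylRel K ℏ) (FreeAlgebra.ι K 1)

namespace WeylFock

open Polynomial

variable (K : Type*) [Field K] (ℏ : K)

/-- The Fock representation of the Weyl algebra on `K[X]`:
`q` acts by multiplication by `X`, `p` by `ℏ • d/dX`. -/
noncomputable def fockAct : Weyl K ℏ →ₐ[K] Module.End K (Polynomial K) :=
  RingQuot.liftAlgHom K ⟨FreeAlgebra.lift K
      ![Algebra.lmul K (Polynomial K) X,
        ℏ • (derivative : Polynomial K →ₗ[K] Polynomial K)],
    by
      rintro x y ⟨⟩
      simp only [map_mul, map_add, FreeAlgebra.lift_ι_apply, AlgHom.commutes,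
        Matrix.cons_val_zero, Matrix.cons_val_one, Matrix.head_cons]
      refine LinearMap.ext fun f => ?_
      simp only [Module.End.mul_apply, LinearMap.add_apply, LinearMap.smul_apply,
        Algebra.coe_lmul_eq_mul, LinearMap.mul_apply', Module.algebraMap_end_apply]
      rw [derivative_mul, derivative_X, one_mul, smul_add, mul_smul_comm, add_comm]⟩

lemma fockAct_q : fockAct K ℏ (Weyl.q K ℏ) = Algebra.lmul K (Polynomial K) X := by
  rw [Weyl.q, fockAct, RingQuot.liftAlgHom_mkAlgHom_apply, FreeAlgebra.lift_ι_apply]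
  rfl

lemma fockAct_p :
    fockAct K ℏ (Weyl.p K ℏ) = ℏ • (derivative : Polynomial K →ₗ[K] Polynomial K) := by
  rw [Weyl.p, fockAct, RingQuot.liftAlgHom_mkAlgHom_apply, FreeAlgebra.lift_ι_apply]
  rfl

lemma fockAct_aeval (a : Polynomial K) :
    fockAct K ℏ (aeval (Weyl.q K ℏ) a) = Algebra.lmul K (Polynomial K) a := by
  have h : (fockAct K ℏ).comp (aeval (Weyl.q K ℏ)) = Algebra.lmul K (Polynomial K) := by
    apply Polynomial.algHom_ext
    simp [fockAct_q]
  exact congrArg (fun g => g a) h                 -- AlgHom congr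

/-- Evaluation of the Fock action on the vacuum vector `1`. -/
noncomputable def fockVec : Weyl K ℏ →ₗ[K] Polynomial K where
  toFun w := fockAct K ℏ w 1
  map_add' x y := by simp
  map_smul' c x := by simp

lemma fockVec_aeval (a : Polynomial K) : fockVec K ℏ (aeval (Weyl.q K ℏ) a) = a := by
  show fockAct K ℏ (aeval (Weyl.q K ℏ) a) 1 = a
  rw [fockAct_aeval]
  simp [Algebra.coe_lmul_eq_mul]

lemma fockVec_span_p {x : Weyl K ℏ}
    (hx : x ∈ Submodule.span (Weyl K ℏ) {Weyl.p K ℏ}) : fockVec K ℏ x = 0 := by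
  rw [Submodule.mem_span_singleton] at hx
  obtain ⟨a, rfl⟩ := hx
  show fockAct K ℏ (a • Weyl.p K ℏ) 1 = 0
  rw [smul_eq_mul, map_mul]
  have : fockAct K ℏ (Weyl.p K ℏ) 1 = 0 := by
    rw [fockAct_p]; simp
  simp [Module.End.mul_apply, this]

lemma pq_rel : Weyl.p K ℏ * Weyl.q K ℏ =
    Weyl.q K ℏ * Weyl.p K ℏ + algebraMap K (Weyl K ℏ) ℏ := by
  have := RingQuot.mkAlgHom_rel K (WeylRel.rel (K := K) (ℏ := ℏ))
  simpa [map_mul, map_add, Weyl.p, Weyl.q, AlgHom.commutes] using this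

lemma p_mul_qpow (n : ℕ) : Weyl.p K ℏ * Weyl.q K ℏ ^ (n + 1) =
    Weyl.q K ℏ ^ (n + 1) * Weyl.p K ℏ + (((n + 1 : ℕ) : K) * ℏ) • Weyl.q K ℏ ^ n := by
  induction n with
  | zero =>
    simpa [Algebra.algebraMap_eq_smul_one] using pq_rel K ℏ
  | succ n ih =>
    have : Weyl.p K ℏ * Weyl.q K ℏ ^ (n + 2)
        = (Weyl.p K ℏ * Weyl.q K ℏ ^ (n + 1)) * Weyl.q K ℏ := by
      rw [mul_assoc, ← pow_succ]
    rw [this, ih, add_mul, smul_mul_assoc, ← pow_succ, mul_assoc, pq_rel K ℏ,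
      mul_add, ← mul_assoc, ← pow_succ]
    rw [Algebra.algebraMap_eq_smul_one, mul_smul_comm, mul_one]
    rw [add_assoc, ← add_smul]
    congr 2
    push_cast
    ring

/-- The left ideal `W·p`. -/
noncomputable abbrev Ip : Submodule (Weyl K ℏ) (Weyl K ℏ) :=
  Submodule.span (Weyl K ℏ) {Weyl.p K ℏ}

/-- The map `K[X] → W/(W·p)`, `a ↦ [a(q)]`. -/
noncomputable def fockφ :
    Polynomial K →ₗ[K] Weyl K ℏ ⧸ Ip K ℏ :=
  ((Ip K ℏ).mkQ.restrictScalars K).comp (aeval (Weyl.q K ℏ)).toLinearMap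

lemma fockφ_apply (a : Polynomial K) :
    fockφ K ℏ a = Submodule.Quotient.mk (aeval (Weyl.q K ℏ) a) := rfl

lemma mk_qpow_mul_p (n : ℕ) :
    (Submodule.Quotient.mk (Weyl.q K ℏ ^ n * Weyl.p K ℏ) : Weyl K ℏ ⧸ Ip K ℏ) = 0 := by
  rw [Submodule.Quotient.mk_eq_zero]
  exact Submodule.smul_mem _ _ (Submodule.mem_span_singleton_self _)

lemma mk_p_mul (a : Polynomial K) :
    (Submodule.Quotient.mk (Weyl.p K ℏ * aeval (Weyl.q K ℏ) a) :
        Weyl K ℏ ⧸ Ip K ℏ) = fockφ K ℏ (ℏ • derivative a) := by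
  induction a using Polynomial.induction_on' with
  | add f g hf hg =>
    rw [map_add, mul_add, Submodule.Quotient.mk_add, hf, hg, derivative_add,
      smul_add, map_add]
  | monomial n c =>
    have haev : aeval (Weyl.q K ℏ) (monomial n c) = c • Weyl.q K ℏ ^ n := by
      simp [aeval_monomial, Algebra.smul_def]
    rw [haev, mul_smul_comm, Submodule.Quotient.mk_smul]
    cases n with
    | zero =>
      have hp0 : (Submodule.Quotient.mk (Weyl.p K ℏ) : Weyl K ℏ ⧸ Ip K ℏ) = 0 := by
        rw [Submodule.Quotient.mk_eq_zero]
        exact Submodule.mem_span_singleton_self _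
      simp [hp0, derivative_monomial]
      exact smul_zero (M := K) (A := Weyl K ℏ ⧸ Ip K ℏ) c
    | succ n =>
      rw [p_mul_qpow, Submodule.Quotient.mk_add, mk_qpow_mul_p, zero_add,
        Submodule.Quotient.mk_smul]
      rw [derivative_monomial]
      rw [fockφ_apply]
      have : aeval (Weyl.q K ℏ) (ℏ • ((monomial (n + 1 - 1)) (c * ↑(n + 1))))
          = (ℏ * (c * ((n:K)+1))) • Weyl.q K ℏ ^ n := by
        rw [map_smul, aeval_monomial, ← Algebra.smul_def, smul_smul]
        congr 1
        push_cast
        ring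
      rw [this, Submodule.Quotient.mk_smul]
      push_cast
      module

lemma range_mul_q {w : Weyl K ℏ}
    (hw : (Submodule.Quotient.mk w : Weyl K ℏ ⧸ Ip K ℏ) ∈ LinearMap.range (fockφ K ℏ)) :
    (Submodule.Quotient.mk (Weyl.q K ℏ * w) : Weyl K ℏ ⧸ Ip K ℏ) ∈
      LinearMap.range (fockφ K ℏ) := by
  obtain ⟨a, ha⟩ := hw
  rw [fockφ_apply, Submodule.Quotient.eq] at ha
  refine ⟨X * a, ?_⟩
  rw [fockφ_apply, map_mul, aeval_X, Submodule.Quotient.eq, ← mul_sub]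
  exact Submodule.smul_mem _ (Weyl.q K ℏ) ha

lemma range_mul_p {w : Weyl K ℏ}
    (hw : (Submodule.Quotient.mk w : Weyl K ℏ ⧸ Ip K ℏ) ∈ LinearMap.range (fockφ K ℏ)) :
    (Submodule.Quotient.mk (Weyl.p K ℏ * w) : Weyl K ℏ ⧸ Ip K ℏ) ∈
      LinearMap.range (fockφ K ℏ) := by
  obtain ⟨a, ha⟩ := hw
  rw [fockφ_apply, Submodule.Quotient.eq] at ha
  refine ⟨ℏ • derivative a, ?_⟩
  rw [← mk_p_mul]
  rw [Submodule.Quotient.eq, ← mul_sub]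
  exact Submodule.smul_mem _ (Weyl.p K ℏ) ha

lemma range_mk (w : Weyl K ℏ) :
    (Submodule.Quotient.mk w : Weyl K ℏ ⧸ Ip K ℏ) ∈ LinearMap.range (fockφ K ℏ) := by
  obtain ⟨x, rfl⟩ := RingQuot.mkAlgHom_surjective K (WeylRel K ℏ) w
  have key : ∀ x : FreeAlgebra K (Fin 2), ∀ w : Weyl K ℏ,
      (Submodule.Quotient.mk w : Weyl K ℏ ⧸ Ip K ℏ) ∈ LinearMap.range (fockφ K ℏ) →
      (Submodule.Quotient.mk (RingQuot.mkAlgHom K (WeylRel K ℏ) x * w) :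
        Weyl K ℏ ⧸ Ip K ℏ) ∈ LinearMap.range (fockφ K ℏ) := by
    intro x
    induction x using FreeAlgebra.induction with
    | grade0 r =>
      intro w hw
      rw [AlgHom.commutes, ← Algebra.smul_def, Submodule.Quotient.mk_smul]
      exact Submodule.smul_mem _ r hw
    | grade1 i =>
      fin_cases i
      · intro w hw
        exact range_mul_q K ℏ hw
      · intro w hw
        exact range_mul_p K ℏ hw
    | mul a b ha hb =>
      intro w hw
      rw [map_mul, mul_assoc]
      exact ha _ (hb _ hw)
    | add a b ha hb =>
      intro w hw
      rw [map_add, add_mul, Submodule.Quotient.mk_add]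
      exact Submodule.add_mem _ (ha _ hw) (hb _ hw)
  have h1 : (Submodule.Quotient.mk (1 : Weyl K ℏ) : Weyl K ℏ ⧸ Ip K ℏ) ∈
      LinearMap.range (fockφ K ℏ) := by
    exact ⟨1, by rw [fockφ_apply, map_one]⟩
  simpa using key x 1 h1

end WeylFock

open WeylFock in
/-- The `K`-linear map `K[X] → W/(W·p)` sending `Xⁿ` to the class of `qⁿ` is a
bijection: the Fock module is identified with `K[q]`. -/
theorem weyl_fock_module_iso
    (K : Type*) [Field K] [CharZero K] (ℏ : K) :
    ∃ φ : Polynomial K →ₗ[K]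
        Weyl K ℏ ⧸ Submodule.span (Weyl K ℏ) {Weyl.p K ℏ},
      (∀ n : ℕ, φ (Polynomial.X ^ n) =
        Submodule.Quotient.mk ((Weyl.q K ℏ) ^ n)) ∧
      Function.Bijective φ := by
  refine ⟨fockφ K ℏ, fun n => ?_, fun a b hab => ?_, fun z => ?_⟩
  · rw [fockφ_apply, map_pow, Polynomial.aeval_X]
  · rw [fockφ_apply, fockφ_apply, Submodule.Quotient.eq] at hab
    have := fockVec_span_p K ℏ hab
    rw [map_sub, fockVec_aeval, fockVec_aeval] at this
    exact sub_eq_zero.mp this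
  · obtain ⟨w, rfl⟩ := Submodule.Quotient.mk_surjective _ z
    exact range_mk K ℏ w
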